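/- Let M be a right R-module. Then M is an SSP module if and only if for any two direct summands A₁ and A₂ of M with A₁ ≅ A₂, the submodule A₁ + A₂ is a direct summand of M. -/

import Mathlib

universe u v w

section Defs

variable {S : Type u} [Ring S]

/-- A submodule `A` is a direct summand of `M`. -/
def IsDirectSummand {M : Type v} [AddCommGroup M] [Module S M] (A : Submodule S M) : Prop :=
  ∃ B : Submodule S M, A ⊓ B = ⊥ ∧ A ⊔ B = ⊤

/-- `A` is an essential submodule of `B`. -/
def IsEssentialIn {M : Type v} [AddCommGroup M] [Module S M] (A B : Submodule S M) : Prop :=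
  A ≤ B ∧ ∀ K : Submodule S M, K ≤ B → K ≠ ⊥ → A ⊓ K ≠ ⊥

/-- `A` is essential in some direct summand of `M`. -/
def EssentialInSummand {M : Type v} [AddCommGroup M] [Module S M] (A : Submodule S M) : Prop :=
  ∃ D : Submodule S M, IsDirectSummand D ∧ IsEssentialIn A D

/-- `A` is a small (superfluous) submodule of `M`. -/
def IsSmallSubmodule {M : Type v} [AddCommGroup M] [Module S M] (A : Submodule S M) : Prop :=
  ∀ K : Submodule S M, A ⊔ K = ⊤ → K = ⊤

/-- `A` lies above the direct summand `D` of `M`, i.e. `D ≤ A` and `A/D` is small in `M/D`. -/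
def LiesAbove {M : Type v} [AddCommGroup M] [Module S M] (A D : Submodule S M) : Prop :=
  IsDirectSummand D ∧ D ≤ A ∧ IsSmallSubmodule (Submodule.map D.mkQ A)

/-- `A` lies above some direct summand of `M`. -/
def LiesAboveSummand {M : Type v} [AddCommGroup M] [Module S M] (A : Submodule S M) : Prop :=
  ∃ D : Submodule S M, LiesAbove A D

end Defs

section ModDefs

variable (S : Type u) [Ring S]

/-- SSP: the sum of any two direct summands is a direct summand. -/
def HasSSP (M : Type v) [AddCommGroup M] [Module S M] : Prop :=
  ∀ A B : Submodule S M, IsDirectSummand A → IsDirectSummand B → IsDirectSummand (A ⊔ B)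

/-- SIP: the intersection of any two direct summands is a direct summand. -/
def HasSIP (M : Type v) [AddCommGroup M] [Module S M] : Prop :=
  ∀ A B : Submodule S M, IsDirectSummand A → IsDirectSummand B → IsDirectSummand (A ⊓ B)

/-- SIP-CS: the intersection of any finite family of direct summands is essential in a
direct summand. -/
def IsSIPCS (M : Type v) [AddCommGroup M] [Module S M] : Prop :=
  ∀ (ι : Type) [Fintype ι] (A : ι → Submodule S M),
    (∀ i, IsDirectSummand (A i)) → EssentialInSummand (⨅ i, A i)

/-- SSP-lifting: if each member of a finite family of submodules lies above a direct summand,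
then their sum lies above a direct summand. -/
def IsSSPLifting (M : Type v) [AddCommGroup M] [Module S M] : Prop :=
  ∀ (ι : Type) [Fintype ι] (A : ι → Submodule S M),
    (∀ i, LiesAboveSummand (A i)) → LiesAboveSummand (⨆ i, A i)

/-- C2 condition: every submodule isomorphic to a direct summand is a direct summand. -/
def HasC2 (M : Type v) [AddCommGroup M] [Module S M] : Prop :=
  ∀ A B : Submodule S M, IsDirectSummand B → Nonempty (A ≃ₗ[S] B) → IsDirectSummand A

/-- C3 condition: the sum of two direct summands with zero intersection is a direct summand. -/
def HasC3 (M : Type v) [AddCommGroup M] [Module S M] : Prop :=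
  ∀ A B : Submodule S M, IsDirectSummand A → IsDirectSummand B → A ⊓ B = ⊥ →
    IsDirectSummand (A ⊔ B)

/-- D2 condition: if `M/A` is isomorphic to a direct summand of `M` then `A` is a direct
summand. -/
def HasD2 (M : Type v) [AddCommGroup M] [Module S M] : Prop :=
  ∀ A : Submodule S M, (∃ B : Submodule S M, IsDirectSummand B ∧
    Nonempty ((M ⧸ A) ≃ₗ[S] B)) → IsDirectSummand A

/-- D3 condition: if two direct summands sum to `M`, their intersection is a direct summand. -/
def IsD3Module (M : Type v) [AddCommGroup M] [Module S M] : Prop :=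
  ∀ A B : Submodule S M, IsDirectSummand A → IsDirectSummand B → A ⊔ B = ⊤ →
    IsDirectSummand (A ⊓ B)

/-- `M` is relatively CS-Rickart to `N`. -/
def RelCSRickart (M : Type v) (N : Type w) [AddCommGroup M] [Module S M]
    [AddCommGroup N] [Module S N] : Prop :=
  ∀ φ : M →ₗ[S] N, EssentialInSummand (LinearMap.ker φ)

/-- `M` is relatively d-CS-Rickart to `N`. -/
def RelDCSRickart (M : Type v) (N : Type w) [AddCommGroup M] [Module S M]
    [AddCommGroup N] [Module S N] : Prop :=
  ∀ φ : N →ₗ[S] M, LiesAboveSummand (LinearMap.range φ)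

/-- CS-Rickart module. -/
def IsCSRickart (M : Type v) [AddCommGroup M] [Module S M] : Prop :=
  RelCSRickart S M M

/-- d-CS-Rickart module. -/
def IsDCSRickart (M : Type v) [AddCommGroup M] [Module S M] : Prop :=
  RelDCSRickart S M M

/-- `M` has an `Ω`-cover, where `Ω` is the class of modules satisfying `P`. -/
def HasCover (P : ModuleCat.{v} S → Prop) (M : Type v) [AddCommGroup M] [Module S M] : Prop :=
  ∃ (E : ModuleCat.{v} S) (g : E →ₗ[S] M), P E ∧
    (∀ (E' : ModuleCat.{v} S), P E' → ∀ g' : E' →ₗ[S] M,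
      ∃ h : E' →ₗ[S] E, g ∘ₗ h = g') ∧
    (∀ h : E →ₗ[S] E, g ∘ₗ h = g → Function.Bijective h)

/-- `M` has an `Ω`-envelope, where `Ω` is the class of modules satisfying `P`. -/
def HasEnvelope (P : ModuleCat.{v} S → Prop) (M : Type v) [AddCommGroup M] [Module S M] : Prop :=
  ∃ (E : ModuleCat.{v} S) (g : M →ₗ[S] E), P E ∧
    (∀ (E' : ModuleCat.{v} S), P E' → ∀ g' : M →ₗ[S] E',
      ∃ h : E →ₗ[S] E', h ∘ₗ g = g') ∧
    (∀ h : E →ₗ[S] E, h ∘ₗ g = g → Function.Bijective h)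

/-- `M` is 2-generated. -/
def TwoGenerated (M : Type v) [AddCommGroup M] [Module S M] : Prop :=
  ∃ a b : M, Submodule.span S ({a, b} : Set M) = ⊤

/-- `M` is finitely cogenerated. -/
def FinitelyCogenerated (M : Type v) [AddCommGroup M] [Module S M] : Prop :=
  ∀ 𝒜 : Set (Submodule S M), sInf 𝒜 = ⊥ →
    ∃ ℬ ⊆ 𝒜, ℬ.Finite ∧ sInf ℬ = ⊥

/-- The socle of `M`: the sum of all simple submodules. -/
def SocleOf (M : Type v) [AddCommGroup M] [Module S M] : Submodule S M :=
  sSup {A : Submodule S M | IsSimpleModule S ↥A}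

/-- An indecomposable module: nonzero, and its only direct summands are `0` and itself. -/
def IsIndecomposable (M : Type v) [AddCommGroup M] [Module S M] : Prop :=
  (⊤ : Submodule S M) ≠ ⊥ ∧
    ∀ A : Submodule S M, IsDirectSummand A → A = ⊥ ∨ A = ⊤

end ModDefs

section RingDefs

variable (R : Type u) [Ring R]

/-- The right annihilator of an element of a right `R`-module, as a right ideal of `R`. -/
def rightAnnihilator {M : Type v} [AddCommGroup M] [Module Rᵐᵒᵖ M] (m : M) :
    Submodule Rᵐᵒᵖ R where
  carrier := {r : R | MulOpposite.op r • m = 0}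
  add_mem' := by
    intro a b ha hb
    simp only [Set.mem_setOf_eq] at *
    rw [MulOpposite.op_add, add_smul, ha, hb, add_zero]
  zero_mem' := by simp
  smul_mem' := by
    intro c x hx
    simp only [Set.mem_setOf_eq] at *
    have : MulOpposite.op (c • x) = c * MulOpposite.op x := by
      rw [MulOpposite.smul_eq_mul_unop]
      simp [MulOpposite.op_mul]
    rw [this, mul_smul, hx, smul_zero]

/-- `M` is a nonsingular right `R`-module. -/
def IsNonsingular (M : Type v) [AddCommGroup M] [Module Rᵐᵒᵖ M] : Prop :=
  ∀ m : M, IsEssentialIn (rightAnnihilator R m) (⊤ : Submodule Rᵐᵒᵖ R) → m = 0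

/-- `R` is a right V-ring: every simple right `R`-module is injective. -/
def IsRightVRing : Prop :=
  ∀ (N : Type u) [AddCommGroup N] [Module Rᵐᵒᵖ N],
    IsSimpleModule Rᵐᵒᵖ N → Module.Injective Rᵐᵒᵖ N

/-- `R` is semiregular: `R/J(R)` is von Neumann regular and idempotents lift modulo `J(R)`. -/
def IsSemiregularRing : Prop :=
  (∀ a : R, ∃ b : R, a - a * b * a ∈ Ideal.jacobson (⊥ : Ideal R) ∧ b = b * a * b) ∧
  (∀ a : R, a * a - a ∈ Ideal.jacobson (⊥ : Ideal R) →
    ∃ e : R, e * e = e ∧ e - a ∈ Ideal.jacobson (⊥ : Ideal R))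

end RingDefs

section SSPProof

variable {S : Type u} [Ring S] {M : Type v} [AddCommGroup M] [Module S M]

theorem exists_projection {A A' : Submodule S M} (h1 : A ⊓ A' = ⊥) (h2 : A ⊔ A' = ⊤) :
    ∃ e : M →ₗ[S] M, (∀ z, e z ∈ A) ∧ (∀ a ∈ A, e a = a) ∧ (∀ z ∈ A', e z = 0) ∧
      (∀ z, z - e z ∈ A') := by
  have hc : IsCompl A A' := ⟨disjoint_iff.2 h1, codisjoint_iff.2 h2⟩
  set e : M →ₗ[S] M := A.subtype.comp (A.projectionOnto A' hc) with he
  have p1 : ∀ z, e z ∈ A := fun z => (A.projectionOnto A' hc z).2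
  have p2 : ∀ a ∈ A, e a = a := fun a ha =>
    congrArg Subtype.val (Submodule.linearProjOfIsCompl_apply_left hc ⟨a, ha⟩)
  have p3 : ∀ z ∈ A', e z = 0 := fun z hz => by
    have := Submodule.linearProjOfIsCompl_apply_right' hc hz
    simp [he, this]
  refine ⟨e, p1, p2, p3, fun z => ?_⟩
  obtain ⟨a, ha, a', ha', hz⟩ := Submodule.mem_sup.1 (show z ∈ A ⊔ A' by rw [h2]; trivial)
  have : e z = a := by rw [← hz, map_add, p2 a ha, p3 a' ha', add_zero]
  rw [this, ← hz]
  simpa using ha'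


theorem ssp_of_iso_sum
    (H : ∀ A₁ A₂ : Submodule S M, IsDirectSummand A₁ → IsDirectSummand A₂ →
        Nonempty (A₁ ≃ₗ[S] A₂) → IsDirectSummand (A₁ ⊔ A₂)) :
    ∀ A B : Submodule S M, IsDirectSummand A → IsDirectSummand B →
      IsDirectSummand (A ⊔ B) := by
  intro A B hA hB
  obtain ⟨A', hA1, hA2⟩ := hA
  obtain ⟨B', hB1, hB2⟩ := hB
  obtain ⟨e, he1, he2, he3, he4⟩ := exists_projection hA1 hA2
  obtain ⟨f, hf1, hf2, hf3, hf4⟩ := exists_projection hB1 hB2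
  have hekill : ∀ z, e z = 0 → z ∈ A' := fun z hz => by
    have := he4 z; rwa [hz, sub_zero] at this
  have hfkill : ∀ z, f z = 0 → z ∈ B' := fun z hz => by
    have := hf4 z; rwa [hz, sub_zero] at this
  have hee : ∀ z, e (e z) = e z := fun z => he2 _ (he1 z)
  have hff : ∀ z, f (f z) = f z := fun z => hf2 _ (hf1 z)
  set u : M →ₗ[S] M := LinearMap.id + (LinearMap.id - f).comp (LinearMap.id - e) with hu
  have hu_apply : ∀ z, u z = z + ((z - e z) - f (z - e z)) := fun z => by
    simp [hu, LinearMap.add_apply, LinearMap.sub_apply, LinearMap.comp_apply]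
  have hfu : ∀ z, f (u z) = f z := fun z => by
    rw [hu_apply, map_add, map_sub, hff, sub_self, add_zero]
  set G : Submodule S M := Submodule.map u B with hG
  have hGinf : G ⊓ B' = ⊥ := by
    rw [Submodule.eq_bot_iff]
    rintro z ⟨hzG, hzB'⟩
    obtain ⟨b, hb, rfl⟩ := hzG
    have h0 : f (u b) = 0 := hf3 _ hzB'
    rw [hfu, hf2 b hb] at h0
    rw [h0, map_zero]
  have hGsup : G ⊔ B' = ⊤ := by
    rw [Submodule.eq_top_iff']
    intro z
    refine Submodule.mem_sup.2 ⟨u (f z), Submodule.mem_map_of_mem (hf1 z),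
      z - u (f z), hfkill _ ?_, by abel⟩
    rw [map_sub, hfu, hff, sub_self]
  have hGds : IsDirectSummand G := ⟨B', hGinf, hGsup⟩
  -- B ≃ G
  let φ : B →ₗ[S] G := LinearMap.codRestrict G (u.comp B.subtype)
    (fun b => Submodule.mem_map_of_mem b.2)
  have hφinj : Function.Injective φ := by
    intro b b' hbb
    have hv : u (b : M) = u (b' : M) := congrArg Subtype.val hbb
    have hfv : f (u (b : M)) = f (u (b' : M)) := by rw [hv]
    rw [hfu, hfu, hf2 _ b.2, hf2 _ b'.2] at hfv
    exact Subtype.ext hfv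
  have hφsurj : Function.Surjective φ := by
    rintro ⟨z, hz⟩
    obtain ⟨b, hb, rfl⟩ := hz
    exact ⟨⟨b, hb⟩, rfl⟩
  have hP : IsDirectSummand (B ⊔ G) :=
    H B G ⟨B', hB1, hB2⟩ hGds ⟨LinearEquiv.ofBijective φ ⟨hφinj, hφsurj⟩⟩
  set P : Submodule S M := B ⊔ G with hPdef
  -- e maps B into P
  have hBP : B ≤ P := le_sup_left
  have hGP : G ≤ P := le_sup_right
  have hebP : ∀ b ∈ B, e b ∈ P := by
    intro b hb
    have hubP : u b ∈ P := hGP (Submodule.mem_map_of_mem hb)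
    have h1 : u b - b ∈ P := Submodule.sub_mem _ hubP (hBP hb)
    have h1' : u b - b = (b - e b) - f (b - e b) := by rw [hu_apply]; abel
    have h2 : f (b - e b) ∈ P := hBP (hf1 _)
    have h3 : b - e b ∈ P := by
      have := Submodule.add_mem _ (h1' ▸ h1) h2
      simpa using this
    have : b - (b - e b) ∈ P := Submodule.sub_mem _ (hBP hb) h3
    simpa using this
  have hePmem : ∀ z ∈ P, e z ∈ P := by
    intro z hz
    obtain ⟨b, hb, g, hg, rfl⟩ := Submodule.mem_sup.1 hz
    obtain ⟨b', hb', rfl⟩ := hg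
    rw [map_add]
    refine Submodule.add_mem _ (hebP b hb) ?_
    have h5 : e (u b') = e b' + ((e b' - e (e b')) - e (f (b' - e b'))) := by
      rw [hu_apply b']; simp only [map_add, map_sub]
    rw [hee b'] at h5
    have h6 : e (u b') = e b' - e (f (b' - e b')) := by rw [h5]; abel
    rw [h6]
    exact Submodule.sub_mem _ (hebP b' hb') (hebP _ (hf1 _))
  set C : Submodule S M := Submodule.map (LinearMap.id - e) P with hC
  have hCapp : ∀ z : M, (LinearMap.id - e : M →ₗ[S] M) z = z - e z := fun z => rfl
  have hCP : C ≤ P := by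
    rintro _ ⟨p, hp, rfl⟩
    rw [hCapp]
    exact Submodule.sub_mem _ hp (hePmem p hp)
  have hCe0 : ∀ z ∈ C, e z = 0 := by
    rintro _ ⟨p, hp, rfl⟩
    rw [hCapp, map_sub, hee, sub_self]
  have hCA' : C ≤ A' := fun z hz => hekill z (hCe0 z hz)
  have hPsubC : ∀ p ∈ P, p - e p ∈ C := fun p hp => ⟨p, hp, rfl⟩
  obtain ⟨Q, hPQ1, hPQ2⟩ := hP
  set Pe : Submodule S M := Submodule.map e P with hPe
  have hPeP : Pe ≤ P := by rintro _ ⟨p, hp, rfl⟩; exact hePmem p hp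
  set C' : Submodule S M := Pe ⊔ Q with hC'
  have hCC'1 : C ⊓ C' = ⊥ := by
    rw [Submodule.eq_bot_iff]
    rintro z ⟨hzC, hzC'⟩
    obtain ⟨y, hy, q, hq, rfl⟩ := Submodule.mem_sup.1 hzC'
    have hq0 : q ∈ P ⊓ Q := ⟨by
      have : (y + q) - y ∈ P := Submodule.sub_mem _ (hCP hzC) (hPeP hy)
      simpa using this, hq⟩
    rw [hPQ1] at hq0
    rw [Submodule.mem_bot] at hq0
    subst hq0
    rw [add_zero] at hzC ⊢
    obtain ⟨p, hp, rfl⟩ := hy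
    have := hCe0 _ hzC
    rwa [hee] at this
  have hCC'2 : C ⊔ C' = ⊤ := by
    rw [Submodule.eq_top_iff']
    intro z
    have hz : z ∈ P ⊔ Q := by rw [hPQ2]; trivial
    obtain ⟨p, hp, q, hq, rfl⟩ := Submodule.mem_sup.1 hz
    have h1 : p - e p ∈ C := hPsubC p hp
    have h2 : e p ∈ C' := Submodule.mem_sup_left (Submodule.mem_map_of_mem hp)
    have h3 : q ∈ C' := Submodule.mem_sup_right hq
    have : (p - e p) + (e p + q) ∈ C ⊔ C' :=
      Submodule.add_mem _ (Submodule.mem_sup_left h1)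
        (Submodule.mem_sup_right (Submodule.add_mem _ h2 h3))
    have heq : (p - e p) + (e p + q) = p + q := by abel
    rwa [heq] at this
  -- A ⊔ C = A ⊔ B
  have hGAB : G ≤ A ⊔ B := by
    rintro _ ⟨b, hb, rfl⟩
    rw [hu_apply]
    have hbm : b ∈ A ⊔ B := Submodule.mem_sup_right hb
    have hebm : e b ∈ A ⊔ B := Submodule.mem_sup_left (he1 b)
    have hfm : f (b - e b) ∈ A ⊔ B := Submodule.mem_sup_right (hf1 _)
    exact Submodule.add_mem _ hbm (Submodule.sub_mem _ (Submodule.sub_mem _ hbm hebm) hfm)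
  have hPAB : P ≤ A ⊔ B := sup_le (le_sup_right) hGAB
  have hCAB : C ≤ A ⊔ B := le_trans hCP hPAB
  have hBAC : B ≤ A ⊔ C := by
    intro b hb
    have h1 : e b ∈ A ⊔ C := Submodule.mem_sup_left (he1 b)
    have h2 : b - e b ∈ A ⊔ C := Submodule.mem_sup_right (hPsubC b (hBP hb))
    have := Submodule.add_mem _ h1 h2
    simpa using this
  have hABAC : A ⊔ B = A ⊔ C :=
    le_antisymm (sup_le le_sup_left hBAC) (sup_le le_sup_left (le_trans hCAB (by rfl)))
  refine ⟨A' ⊓ C', ?_, ?_⟩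
  · rw [Submodule.eq_bot_iff]
    rintro z ⟨hzAB, hzA', hzC'⟩
    rw [hABAC] at hzAB
    obtain ⟨a, ha, c, hc, rfl⟩ := Submodule.mem_sup.1 hzAB
    have hez : e (a + c) = 0 := he3 _ hzA'
    rw [map_add, he2 a ha, hCe0 c hc, add_zero] at hez
    subst hez
    rw [zero_add] at hzC' ⊢
    have : c ∈ C ⊓ C' := ⟨hc, hzC'⟩
    rwa [hCC'1, Submodule.mem_bot] at this
  · rw [Submodule.eq_top_iff']
    intro z
    have hy : z - e z ∈ C ⊔ C' := by rw [hCC'2]; trivial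
    obtain ⟨c, hc, c', hc', hyeq⟩ := Submodule.mem_sup.1 hy
    have hec' : e c' = 0 := by
      have : e (c + c') = e (z - e z) := by rw [hyeq]
      rw [map_add, map_sub, hee, sub_self, hCe0 c hc, zero_add] at this
      exact this
    have hc'A' : c' ∈ A' := hekill _ hec'
    have h1 : e z ∈ (A ⊔ B) ⊔ (A' ⊓ C') :=
      Submodule.mem_sup_left (Submodule.mem_sup_left (he1 z))
    have h2 : c ∈ (A ⊔ B) ⊔ (A' ⊓ C') := Submodule.mem_sup_left (hCAB hc)
    have h3 : c' ∈ (A ⊔ B) ⊔ (A' ⊓ C') := Submodule.mem_sup_right ⟨hc'A', hc'⟩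
    have : e z + (c + c') ∈ (A ⊔ B) ⊔ (A' ⊓ C') :=
      Submodule.add_mem _ h1 (Submodule.add_mem _ h2 h3)
    rw [hyeq] at this
    simpa using this


end SSPProof

/-- `M` is SSP iff the sum of any two isomorphic direct summands is a
direct summand. -/
theorem statement_1 (R : Type u) [Ring R] (M : Type v) [AddCommGroup M] [Module Rᵐᵒᵖ M] :
    HasSSP Rᵐᵒᵖ M ↔
      ∀ A₁ A₂ : Submodule Rᵐᵒᵖ M, IsDirectSummand A₁ → IsDirectSummand A₂ →
        Nonempty (A₁ ≃ₗ[Rᵐᵒᵖ] A₂) → IsDirectSummand (A₁ ⊔ A₂) := by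
  constructor
  · intro h A₁ A₂ h1 h2 _
    exact h A₁ A₂ h1 h2
  · intro H
    exact fun A B hA hB => ssp_of_iso_sum H A B hA hB
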